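/- Descent lemma for (H0,H1)-smooth functions: if f is (H0, H1)-smooth and y = w − η∇f(w) with step size η > 0 satisfying η‖∇f(w)‖ ≤ 1/√H1, then f(y) ≤ f(w) − η‖∇f(w)‖² + (H0 + H1(f(w) − f*)) η² ‖∇f(w)‖². -/

import Mathlib

/-- If `F 0 ≤ F t` fails nowhere: monotonicity from nonneg derivative on `[0,a]`. -/
lemma aux_mono (F F' : ℝ → ℝ) (a : ℝ) (hF : ∀ t, HasDerivAt F (F' t) t)
    (h0 : ∀ t ∈ Set.Icc (0:ℝ) a, 0 ≤ F' t) :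
    ∀ t ∈ Set.Icc (0:ℝ) a, F 0 ≤ F t := by
  intro t ht
  have hmono : MonotoneOn F (Set.Icc 0 a) := by
    apply monotoneOn_of_deriv_nonneg (convex_Icc 0 a)
    · exact (Differentiable.continuous fun x => (hF x).differentiableAt).continuousOn
    · exact fun x _ => (hF x).differentiableAt.differentiableWithinAt
    · intro x hx
      rw [(hF x).deriv]
      exact h0 x (interior_subset hx)
  exact hmono (Set.mem_Icc.mpr ⟨le_refl 0, le_trans ht.1 ht.2⟩) ht ht.1

/-- Second-order Taylor-type upper bound on `[0,a]`. -/
lemma aux_taylor2 (φ φ' φ'' : ℝ → ℝ) (C a : ℝ) (ha : 0 ≤ a)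
    (hφ : ∀ t, HasDerivAt φ (φ' t) t)
    (hφ' : ∀ t, HasDerivAt φ' (φ'' t) t)
    (hC : ∀ t ∈ Set.Icc (0:ℝ) a, φ'' t ≤ C) :
    φ a ≤ φ 0 + a * φ' 0 + C * a ^ 2 / 2 := by
  -- first: φ' t ≤ φ' 0 + C * t on [0,a]
  have h1 : ∀ t ∈ Set.Icc (0:ℝ) a, φ' t ≤ φ' 0 + C * t := by
    have := aux_mono (fun t => C * t - φ' t + φ' 0) (fun t => C - φ'' t) a
      (fun t => ((((hasDerivAt_id t).const_mul C).sub (hφ' t)).add_const (φ' 0)).congr_deriv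
        (by ring))
      (fun t ht => by show (0:ℝ) ≤ C - φ'' t; linarith [hC t ht])
    intro t ht
    have h := this t ht
    linarith
  have h2 := aux_mono (fun t => φ 0 + φ' 0 * t + C / 2 * t ^ 2 - φ t)
      (fun t => φ' 0 + C * t - φ' t) a
      (fun t => (((hasDerivAt_const t (φ 0)).add ((hasDerivAt_id t).const_mul (φ' 0))).add
          ((hasDerivAt_pow 2 t).const_mul (C / 2))).sub (hφ t) |>.congr_deriv (by ring))
      (fun t ht => by show (0:ℝ) ≤ φ' 0 + C * t - φ' t; linarith [h1 t ht])
  have h := h2 a (Set.mem_Icc.mpr ⟨ha, le_refl a⟩)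
  nlinarith

set_option maxHeartbeats 1000000 in
/-- Descent lemma for `(H0,H1)`-smooth functions. -/
theorem stmt_7 {d : ℕ} (f : EuclideanSpace ℝ (Fin d) → ℝ)
    (H0 H1 fstar η : ℝ) (w : EuclideanSpace ℝ (Fin d))
    (hH0 : 0 ≤ H0) (hH1 : 0 < H1)
    (hf : ContDiff ℝ 2 f) (hfstar : IsGLB (Set.range f) fstar)
    (hs : ∀ z, ‖iteratedFDeriv ℝ 2 f z‖ ≤ H0 + H1 * (f z - fstar))
    (hη0 : 0 < η) (hstep : η * ‖gradient f w‖ ≤ 1 / Real.sqrt H1) :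
    f (w - η • gradient f w) ≤ f w - η * ‖gradient f w‖ ^ 2
      + (H0 + H1 * (f w - fstar)) * η ^ 2 * ‖gradient f w‖ ^ 2 := by
  set g : EuclideanSpace ℝ (Fin d) := gradient f w with hg
  set v : EuclideanSpace ℝ (Fin d) := η • g with hv
  set z : ℝ → EuclideanSpace ℝ (Fin d) := fun t => w - t • v with hzdef
  have hdf : Differentiable ℝ f := hf.differentiable (by norm_num)
  have hdf2 : Differentiable ℝ (fderiv ℝ f) :=
    (hf.fderiv_right (m := 1) (by norm_num)).differentiable one_ne_zero
  have hz : ∀ t : ℝ, HasDerivAt z (-v) t := by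
    intro t
    have h1 : HasDerivAt (fun t : ℝ => t • v) ((1:ℝ) • v) t := (hasDerivAt_id t).smul_const v
    simpa using h1.const_sub w
  set φ : ℝ → ℝ := fun t => f (z t) with hφdef
  set φ' : ℝ → ℝ := fun t => fderiv ℝ f (z t) (-v) with hφ'def
  set φ'' : ℝ → ℝ := fun t => fderiv ℝ (fderiv ℝ f) (z t) (-v) (-v) with hφ''def
  have hφ : ∀ t, HasDerivAt φ (φ' t) t :=
    fun t => (hdf (z t)).hasFDerivAt.comp_hasDerivAt t (hz t)
  have hφ' : ∀ t, HasDerivAt φ' (φ'' t) t := by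
    intro t
    have h1 : HasDerivAt (fun t => fderiv ℝ f (z t)) (fderiv ℝ (fderiv ℝ f) (z t) (-v)) t :=
      (hdf2 (z t)).hasFDerivAt.comp_hasDerivAt t (hz t)
    have h2 := h1.clm_apply (hasDerivAt_const t (-v))
    simp only [map_zero, add_zero] at h2
    exact h2
  have hz0 : z 0 = w := by simp [hzdef]
  have hz1 : z 1 = w - η • g := by simp [hzdef, hv]
  -- φ' 0 = -(η * ‖g‖²)
  have hfd : ∀ x u, fderiv ℝ f x u = inner ℝ (gradient f x) u := by
    intro x u
    rw [((hdf x).hasGradientAt).hasFDerivAt.fderiv]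
    rfl
  have hφ'0 : φ' 0 = -(η * ‖g‖ ^ 2) := by
    show fderiv ℝ f (z 0) (-v) = _
    rw [hz0, hfd w (-v), hv, inner_neg_right, inner_smul_right, real_inner_self_eq_norm_sq]
  -- |φ'' t| ≤ ‖iteratedFDeriv 2‖ ‖v‖²
  have hb : ∀ t, |φ'' t| ≤ ‖iteratedFDeriv ℝ 2 f (z t)‖ * ‖v‖ ^ 2 := by
    intro t
    have h1 := (iteratedFDeriv ℝ 2 f (z t)).le_opNorm ![-v, -v]
    rw [iteratedFDeriv_two_apply] at h1
    simp only [Matrix.cons_val_zero, Matrix.cons_val_one, Matrix.head_cons, Fin.prod_univ_two,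
      norm_neg] at h1
    calc |φ'' t| = ‖fderiv ℝ (fderiv ℝ f) (z t) (-v) (-v)‖ := (Real.norm_eq_abs _).symm
      _ ≤ ‖iteratedFDeriv ℝ 2 f (z t)‖ * (‖v‖ * ‖v‖) := h1
      _ = ‖iteratedFDeriv ℝ 2 f (z t)‖ * ‖v‖ ^ 2 := by ring
  have hvn : ‖v‖ = η * ‖g‖ := by
    rw [hv, norm_smul, Real.norm_eq_abs, abs_of_pos hη0]
  have hv2 : ‖v‖ ^ 2 ≤ 1 / H1 := by
    have h1 : ‖v‖ ≤ 1 / Real.sqrt H1 := by rw [hvn]; exact hstep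
    have h2 : ‖v‖ ^ 2 ≤ (1 / Real.sqrt H1) ^ 2 := by
      apply pow_le_pow_left₀ (norm_nonneg v) h1
    calc ‖v‖ ^ 2 ≤ (1 / Real.sqrt H1) ^ 2 := h2
      _ = 1 / H1 := by rw [div_pow, one_pow, Real.sq_sqrt hH1.le]
  have hlb : ∀ x, fstar ≤ f x := fun x => hfstar.1 ⟨x, rfl⟩
  -- max point of φ on [0,1]
  have hzc : Continuous z := continuous_const.sub (continuous_id.smul continuous_const)
  obtain ⟨ts, hts, hmax⟩ := isCompact_Icc.exists_isMaxOn (Set.nonempty_Icc.2 zero_le_one)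
    ((hdf.continuous.comp hzc).continuousOn (s := Set.Icc 0 1))
  have hmax' : ∀ s ∈ Set.Icc (0:ℝ) 1, f (z s) ≤ f (z ts) := fun s hs => hmax hs
  set A : ℝ := f (z ts) - fstar with hA
  have hA0 : 0 ≤ A := by have := hlb (z ts); linarith
  set ψ0 : ℝ := f w - fstar with hψ0
  have hψ00 : 0 ≤ ψ0 := by have := hlb w; linarith
  have hφ0 : φ 0 = f w := by show f (z 0) = f w; rw [hz0]
  have hφ1 : φ 1 = f (w - η • g) := by show f (z 1) = f (w - η • g); rw [hz1]
  have hφts : φ ts = A + fstar := by show f (z ts) = A + fstar; rw [hA]; ring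
  clear_value A ψ0 φ'' φ' φ z v g
  -- Step 1: bootstrap bound A ≤ 2ψ0 + H0/H1
  have hstep1 : ∀ s ∈ Set.Icc (0:ℝ) 1, φ'' s ≤ (H0 + H1 * A) * ‖v‖ ^ 2 := by
    intro s hsm
    have h1 := hb s
    have h2 := hs (z s)
    have h3 := hmax' s hsm
    have h4 : ‖iteratedFDeriv ℝ 2 f (z s)‖ ≤ H0 + H1 * A := by
      calc ‖iteratedFDeriv ℝ 2 f (z s)‖ ≤ H0 + H1 * (f (z s) - fstar) := h2
        _ ≤ H0 + H1 * A := by nlinarith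
    have h5 : φ'' s ≤ |φ'' s| := le_abs_self _
    nlinarith [sq_nonneg ‖v‖, norm_nonneg (iteratedFDeriv ℝ 2 f (z s))]
  have htay1 := aux_taylor2 φ φ' φ'' ((H0 + H1 * A) * ‖v‖ ^ 2) ts hts.1 hφ hφ'
    (fun t ht => hstep1 t ⟨ht.1, le_trans ht.2 hts.2⟩)
  have hAbound : A ≤ 2 * ψ0 + H0 / H1 := by
    have hts1 : ts ≤ 1 := hts.2
    have hts0 : 0 ≤ ts := hts.1
    have hterm : ts * φ' 0 ≤ 0 := by
      rw [hφ'0]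
      have := mul_nonneg hts.1 (mul_nonneg hη0.le (sq_nonneg ‖g‖))
      linarith
    have hCnn : 0 ≤ H0 + H1 * A := by nlinarith
    have hC2 : (H0 + H1 * A) * ‖v‖ ^ 2 ≤ (H0 + H1 * A) / H1 := by
      calc (H0 + H1 * A) * ‖v‖ ^ 2 ≤ (H0 + H1 * A) * (1 / H1) :=
        mul_le_mul_of_nonneg_left hv2 hCnn
        _ = (H0 + H1 * A) / H1 := by ring
    have hts2 : ts ^ 2 ≤ 1 := by nlinarith
    have key : A ≤ ψ0 + (H0 + H1 * A) / H1 / 2 := by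
      have h6 : (H0 + H1 * A) * ‖v‖ ^ 2 * ts ^ 2 / 2 ≤ (H0 + H1 * A) / H1 / 2 := by
        have hnn : 0 ≤ (H0 + H1 * A) * ‖v‖ ^ 2 := by positivity
        have h7 := mul_le_mul_of_nonneg_left hts2 hnn
        rw [mul_one] at h7
        linarith [h7, hC2]
      nlinarith [htay1]
    have hd : (H0 + H1 * A) / H1 = H0 / H1 + A := by field_simp
    rw [hd] at key
    linarith
  -- Step 2: final Taylor bound
  have hstep2 : ∀ s ∈ Set.Icc (0:ℝ) 1, φ'' s ≤ 2 * (H0 + H1 * ψ0) * ‖v‖ ^ 2 := by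
    intro s hsm
    have h1 := hb s
    have h2 := hs (z s)
    have h3 := hmax' s hsm
    have h4 : ‖iteratedFDeriv ℝ 2 f (z s)‖ ≤ 2 * (H0 + H1 * ψ0) := by
      have h5 : H1 * (H0 / H1) = H0 := by field_simp
      calc ‖iteratedFDeriv ℝ 2 f (z s)‖ ≤ H0 + H1 * (f (z s) - fstar) := h2
        _ ≤ H0 + H1 * A := by nlinarith
        _ ≤ H0 + H1 * (2 * ψ0 + H0 / H1) := by nlinarith
        _ = 2 * (H0 + H1 * ψ0) := by rw [mul_add, h5]; ring
    have h5 : φ'' s ≤ |φ'' s| := le_abs_self _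
    nlinarith [sq_nonneg ‖v‖, norm_nonneg (iteratedFDeriv ℝ 2 f (z s))]
  have htay2 := aux_taylor2 φ φ' φ'' (2 * (H0 + H1 * ψ0) * ‖v‖ ^ 2) 1 zero_le_one hφ hφ'
    hstep2
  have hv2eq : ‖v‖ ^ 2 = η ^ 2 * ‖g‖ ^ 2 := by rw [hvn]; ring
  rw [hv, ← hφ1]
  rw [hφ0, hφ'0, hv2eq] at htay2
  ring_nf at htay2 ⊢
  linarith [htay2]
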